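/- Let (aₙ)ₙ≥₁ be a sequence of nonnegative reals, α ∈ [0,1), a = max{a₁, a₂}, and suppose aₙ₊₂ ≤ α·max{aₙ, aₙ₊₁} for all n ≥ 1. Then aₙ ≤ α^{(n/2)−1}·a for all n ≥ 3, and if (aₙ) are the consecutive distances d(xₙ₋₁,xₙ) of a sequence (xₙ) in a metric space, then (xₙ) is Cauchy. -/
import Mathlib


theorem stmt_17 (a : ℕ → ℝ) (α : ℝ) (hα0 : 0 ≤ α) (hα1 : α < 1)
    (hnn : ∀ n, 1 ≤ n → 0 ≤ a n)
    (hrec : ∀ n, 1 ≤ n → a (n + 2) ≤ α * max (a n) (a (n + 1))) :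
    (∀ n : ℕ, 3 ≤ n → a n ≤ α ^ ((n : ℝ)/2 - 1) * max (a 1) (a 2)) ∧
    (∀ (X : Type) (_ : MetricSpace X) (x : ℕ → X),
      (∀ n, 1 ≤ n → a n = dist (x (n - 1)) (x n)) → CauchySeq x) := by
  set M := max (a 1) (a 2) with hMdef
  have hM : 0 ≤ M := le_trans (hnn 1 le_rfl) (le_max_left _ _)
  have key : ∀ n, 1 ≤ n → a n ≤ α ^ ((n - 1) / 2) * M := by
    intro n
    induction n using Nat.strong_induction_on with
    | _ n ih =>
      intro hn
      match n, hn with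
      | 1, _ => simp [hMdef]
      | 2, _ => simp [hMdef]
      | (m + 3), _ =>
        have h1 := ih (m + 1) (by omega) (by omega)
        have h2 := ih (m + 2) (by omega) (by omega)
        have hle1 : a (m + 1) ≤ α ^ (m / 2) * M := h1
        have hle2 : a (m + 2) ≤ α ^ (m / 2) * M := by
          refine h2.trans (mul_le_mul_of_nonneg_right ?_ hM)
          exact pow_le_pow_of_le_one hα0 hα1.le (Nat.div_le_div_right (by omega))
        calc a (m + 3) ≤ α * max (a (m + 1)) (a (m + 2)) := hrec (m + 1) (by omega)
          _ ≤ α * (α ^ (m / 2) * M) :=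
              mul_le_mul_of_nonneg_left (max_le hle1 hle2) hα0
          _ = α ^ ((m + 3 - 1) / 2) * M := by
              have h : (m + 3 - 1) / 2 = m / 2 + 1 := by omega
              rw [h, pow_succ]; ring
  constructor
  · intro n hn
    have hk := key n (by omega)
    set k := (n - 1) / 2 with hkdef
    have hk1 : 1 ≤ k := by omega
    have h2k : (n : ℝ) / 2 - 1 ≤ (k : ℝ) := by
      have h : n ≤ 2 * k + 2 := by omega
      have h' : (n : ℝ) ≤ 2 * (k : ℝ) + 2 := by exact_mod_cast h
      linarith
    rcases eq_or_lt_of_le hα0 with h0 | h0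
    · rw [← h0] at hk ⊢
      have hz : (0 : ℝ) ^ k = 0 := zero_pow (by omega)
      have hz' : (0 : ℝ) ^ ((n : ℝ) / 2 - 1) = 0 := by
        apply Real.zero_rpow
        have : (3 : ℝ) ≤ (n : ℝ) := by exact_mod_cast hn
        intro h; nlinarith
      rw [hz'] at *
      rw [hz] at hk
      linarith
    · refine hk.trans (mul_le_mul_of_nonneg_right ?_ hM)
      rw [← Real.rpow_natCast α k]
      exact Real.rpow_le_rpow_of_exponent_ge h0 hα1.le h2k
  · intro X _ x hx
    apply cauchySeq_of_summable_dist
    have hd : ∀ n, dist (x n) (x (n + 1)) = a (n + 1) := by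
      intro n
      have := hx (n + 1) (by omega)
      simpa using this.symm
    set r := Real.sqrt α with hrdef
    have hr0 : 0 ≤ r := Real.sqrt_nonneg _
    have hr1 : r < 1 := by
      have : r < Real.sqrt 1 := Real.sqrt_lt_sqrt hα0 hα1
      simpa using this
    have hrsq : r ^ 2 = α := Real.sq_sqrt hα0
    have hbound : ∀ n, dist (x n) (x (n + 1)) ≤ M * r ^ (n - 1) := by
      intro n
      rw [hd n]
      have hkey : a (n + 1) ≤ α ^ (n / 2) * M := by
        exact key (n + 1) (by omega)
      have he : α ^ (n / 2) ≤ r ^ (n - 1) := by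
        have h' : α ^ (n / 2) = r ^ (2 * (n / 2)) := by rw [pow_mul, hrsq]
        rw [h']
        exact pow_le_pow_of_le_one hr0 hr1.le (by omega)
      calc a (n + 1) ≤ α ^ (n / 2) * M := hkey
        _ ≤ r ^ (n - 1) * M := mul_le_mul_of_nonneg_right he hM
        _ = M * r ^ (n - 1) := mul_comm _ _
    have h1 : Summable (fun n : ℕ => r ^ n) := summable_geometric_of_lt_one hr0 hr1
    have h2 : Summable (fun n : ℕ => r ^ (n - 1)) := by
      refine (summable_nat_add_iff 1).mp ?_
      simpa using h1
    exact Summable.of_nonneg_of_le (fun n => dist_nonneg) hbound (h2.mul_left M)
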